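/- Let λ_eq be defined as in the paper for ρ₁, ρ₂ > 0, ρ₁ ≠ ρ₂, t_s ∈ (0,1), and λ(t_s) = (λ_eq + 1/ρ₁)e^{ρ₁ t_s} − 1/ρ₁. If ρ₁ < ρ₂, then λ_eq < λ(t_s) < 0, i.e., the adjoint variable increases on the first subinterval and both extremes are negative. -/

import Mathlib

/-- Case ρ₁ < ρ₂: the adjoint increases on the first subinterval and stays negative. -/
theorem stmt_13 (ρ₁ ρ₂ ts : ℝ) (h₁ : 0 < ρ₁) (h₂ : 0 < ρ₂) (hlt : ρ₁ < ρ₂)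
    (hts : ts ∈ Set.Ioo (0:ℝ) 1)
    (lamEq lamTs : ℝ)
    (hEq : lamEq =
      (ρ₁ - ρ₂ + ρ₂ * Real.exp (ρ₁ * ts) - ρ₁ * Real.exp (ρ₂ * (ts - 1))) /
        (ρ₁ * ρ₂ * Real.exp (ρ₂ * (ts - 1)) - ρ₁ * ρ₂ * Real.exp (ρ₁ * ts)))
    (hTs : lamTs = (lamEq + 1/ρ₁) * Real.exp (ρ₁ * ts) - 1/ρ₁) :
    lamEq < lamTs ∧ lamTs < 0 := by
  obtain ⟨hts0, hts1⟩ := hts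
  set A := Real.exp (ρ₁ * ts) with hAdef
  set B := Real.exp (ρ₂ * (ts - 1)) with hBdef
  have hA : 1 < A := by
    rw [hAdef, show (1:ℝ) = Real.exp 0 by simp]
    exact Real.exp_lt_exp.mpr (by positivity)
  have hB : B < 1 := by
    rw [hBdef]
    exact Real.exp_lt_one_iff.mpr (mul_neg_of_pos_of_neg h₂ (by linarith))
  have hB0 : 0 < B := Real.exp_pos _
  have hD : ρ₁ * ρ₂ * B - ρ₁ * ρ₂ * A < 0 := by
    nlinarith [mul_pos h₁ h₂, lt_trans hB hA]
  have hDne : ρ₁ * ρ₂ * B - ρ₁ * ρ₂ * A ≠ 0 := ne_of_lt hD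
  have key : lamEq + 1/ρ₁ =
      (ρ₁ * (ρ₁ - ρ₂) * (1 - B)) / (ρ₁ * (ρ₁ * ρ₂ * B - ρ₁ * ρ₂ * A)) := by
    rw [hEq]
    field_simp [show B - A ≠ 0 from fun h => by linarith]
    ring
  have hpos : 0 < lamEq + 1/ρ₁ := by
    rw [key]
    apply div_pos_of_neg_of_neg
    · nlinarith [mul_pos h₁ (mul_pos (sub_pos.mpr hlt) (sub_pos.mpr hB))]
    · exact mul_neg_of_pos_of_neg h₁ hD
  have keyTs : lamTs =
      (A * ρ₁ * (1 - B) + ρ₂ * B * (A - 1)) / (ρ₁ * ρ₂ * B - ρ₁ * ρ₂ * A) := by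
    rw [hTs, hEq]
    field_simp [show B - A ≠ 0 from fun h => by linarith]
    ring
  constructor
  · have h' : lamTs - lamEq = (lamEq + 1/ρ₁) * (A - 1) := by rw [hTs]; ring
    nlinarith [mul_pos hpos (sub_pos.mpr hA)]
  · rw [keyTs]
    apply div_neg_of_pos_of_neg _ hD
    nlinarith [mul_pos (mul_pos (Real.exp_pos (ρ₁*ts)) h₁) (sub_pos.mpr hB),
      mul_pos (mul_pos h₂ hB0) (sub_pos.mpr hA)]
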